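/- Let G = (V, E) be a finite simple undirected graph with N = |V| ≥ 3, let B ⊆ E, let t = ⌊|B|/2⌋, and let W_{G,B} be the workflow authorization policy constructed from (G, B). Then the following are equivalent: (i) for every D ⊆ B with |D| ≤ |B|/2, the graph G_D = (V, E ∖ D) has a Hamiltonian cycle; (ii) W_{G,B} is statically resilient for budget t. -/

import Mathlib

/-- A workflow authorization policy `W = (S, ≼, U, A, C)`:
steps `S`, an ordering relation `ord` (the partial order `≼`), users `U`,
a step authorization relation `A ⊆ S × U`, and a set `C` of constraints.
A constraint is a pair `(T, Θ)` where `T ⊆ S` and `Θ` is a set of functions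
from `T` to `U` (represented as `σ → Option υ` with domain exactly `T`). -/
structure WAP (σ υ : Type) where
  S : Finset σ
  ord : σ → σ → Prop
  U : Finset υ
  A : Set (σ × υ)
  C : Set (Finset σ × Set (σ → Option υ))

namespace WAP

variable {σ υ : Type} [DecidableEq σ] [DecidableEq υ]

/-- Well-formedness: `ord` is a partial order on `S`, `A ⊆ S × U`, and every
constraint `(T, Θ)` has `T ⊆ S` and `Θ` a set of functions from `T` to `U`. -/
def WellFormed (W : WAP σ υ) : Prop :=
  (∀ s ∈ W.S, W.ord s s) ∧
  (∀ s₁ ∈ W.S, ∀ s₂ ∈ W.S, W.ord s₁ s₂ → W.ord s₂ s₁ → s₁ = s₂) ∧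
  (∀ s₁ ∈ W.S, ∀ s₂ ∈ W.S, ∀ s₃ ∈ W.S, W.ord s₁ s₂ → W.ord s₂ s₃ → W.ord s₁ s₃) ∧
  (∀ p ∈ W.A, p.1 ∈ W.S ∧ p.2 ∈ W.U) ∧
  (∀ c ∈ W.C, c.1 ⊆ W.S ∧
    ∀ θ ∈ c.2, (∀ s, θ s ≠ none ↔ s ∈ c.1) ∧ ∀ s u, θ s = some u → u ∈ W.U)

/-- A partial plan: a partial function from `S` to `U` whose domain is
causally closed (if `s₁` is assigned and `s₂ ≺ s₁` then `s₂` is assigned). -/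
def IsPartialPlan (W : WAP σ υ) (θ : σ → Option υ) : Prop :=
  (∀ s u, θ s = some u → s ∈ W.S ∧ u ∈ W.U) ∧
  ∀ s₁ s₂, s₁ ∈ W.S → s₂ ∈ W.S → θ s₁ ≠ none → W.ord s₂ s₁ → s₂ ≠ s₁ → θ s₂ ≠ none

/-- Restriction of a partial plan to a set `T` of steps. -/
def restrictTo (θ : σ → Option υ) (T : Finset σ) : σ → Option υ :=
  fun s => if s ∈ T then θ s else none

/-- Validity of a (partial) plan: every assignment is authorized, and every
constraint whose step set is contained in the domain is satisfied. -/
def Valid (W : WAP σ υ) (θ : σ → Option υ) : Prop :=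
  (∀ s u, θ s = some u → (s, u) ∈ W.A) ∧
  ∀ c ∈ W.C, (∀ s ∈ c.1, θ s ≠ none) → restrictTo θ c.1 ∈ c.2

/-- A plan: a partial plan whose domain is all of `S`. -/
def IsPlan (W : WAP σ υ) (θ : σ → Option υ) : Prop :=
  W.IsPartialPlan θ ∧ ∀ s ∈ W.S, θ s ≠ none

def IsValidPlan (W : WAP σ υ) (θ : σ → Option υ) : Prop :=
  W.IsPlan θ ∧ W.Valid θ

/-- `θ` assigns no user from `Δ`. -/
def Avoids (θ : σ → Option υ) (Δ : Finset υ) : Prop :=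
  ∀ s u, θ s = some u → u ∉ Δ

/-- Static resiliency for budget `t`. -/
def StaticallyResilient (W : WAP σ υ) (t : ℕ) : Prop :=
  ∀ Δ : Finset υ, Δ ⊆ W.U → Δ.card ≤ t → ∃ θ, W.IsValidPlan θ ∧ Avoids θ Δ

/-- A move of Player 1: assign a user `u ∈ U ∖ Δ` to a not-yet-assigned step,
so that the result remains a causally closed partial plan and remains valid
(if the extension were invalid, Player 2 would win at once). -/
def P1Move (W : WAP σ υ) (Δ : Finset υ) (θ θ' : σ → Option υ) : Prop :=
  ∃ s u, s ∈ W.S ∧ θ s = none ∧ u ∈ W.U ∧ u ∉ Δ ∧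
    θ' = Function.update θ s (some u) ∧
    W.IsPartialPlan θ' ∧ W.Valid θ'

/-- A move of Player 2 in the one-shot resiliency game: either pass, or
(if it has not yet struck) strike, adding at most `t` users of `U` to `Δ`. -/
def OneShotP2Move (W : WAP σ υ) (t : ℕ) (Δ : Finset υ) (struck : Bool)
    (Δ' : Finset υ) (struck' : Bool) : Prop :=
  (Δ' = Δ ∧ struck' = struck) ∨
  (struck = false ∧ struck' = true ∧ Δ ⊆ Δ' ∧ Δ' ⊆ W.U ∧ (Δ' \ Δ).card ≤ t)

/-- Player 1 can force a win of the one-shot resiliency game within `n`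
more rounds, from the given configuration (`struck` records whether
Player 2 has already struck).  Player 1 has won once the (valid) partial
plan has been extended to a valid plan on all of `S`; otherwise, for every
move of Player 2 there must be a move of Player 1 from which Player 1 can
still force a win.  Since each round assigns one more step, the game from
the initial configuration lasts at most `|S|` rounds. -/
def OneShotWins (W : WAP σ υ) (t : ℕ) :
    ℕ → Finset υ → (σ → Option υ) → Bool → Prop
  | 0, _, θ, _ => (∀ s ∈ W.S, θ s ≠ none) ∧ W.IsPartialPlan θ ∧ W.Valid θ
  | n + 1, Δ, θ, struck =>
      ((∀ s ∈ W.S, θ s ≠ none) ∧ W.IsPartialPlan θ ∧ W.Valid θ) ∨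
      ((∃ s ∈ W.S, θ s = none) ∧
        ∀ Δ' struck', OneShotP2Move W t Δ struck Δ' struck' →
          ∃ θ', P1Move W Δ' θ θ' ∧ OneShotWins W t n Δ' θ' struck')

/-- One-shot resiliency for budget `t`: Player 1 wins the one-shot
resiliency game (from the initial configuration `(∅, ∅)`) no matter how
Player 2 plays. -/
def OneShotResilient (W : WAP σ υ) (t : ℕ) : Prop :=
  OneShotWins W t W.S.card ∅ (fun _ => none) false

/-- A move of Player 2 in the decremental resiliency game: add zero or more
users of `U` to `Δ`, subject to `|Δ| ≤ t` throughout. -/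
def DecP2Move (W : WAP σ υ) (t : ℕ) (Δ Δ' : Finset υ) : Prop :=
  Δ ⊆ Δ' ∧ Δ' ⊆ W.U ∧ Δ'.card ≤ t

/-- Player 1 can force a win of the decremental resiliency game within `n`
more rounds. -/
def DecWins (W : WAP σ υ) (t : ℕ) : ℕ → Finset υ → (σ → Option υ) → Prop
  | 0, _, θ => (∀ s ∈ W.S, θ s ≠ none) ∧ W.IsPartialPlan θ ∧ W.Valid θ
  | n + 1, Δ, θ =>
      ((∀ s ∈ W.S, θ s ≠ none) ∧ W.IsPartialPlan θ ∧ W.Valid θ) ∨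
      ((∃ s ∈ W.S, θ s = none) ∧
        ∀ Δ', DecP2Move W t Δ Δ' →
          ∃ θ', P1Move W Δ' θ θ' ∧ DecWins W t n Δ' θ')

/-- Decremental resiliency for budget `t`: Player 1 wins the decremental
resiliency game no matter how Player 2 plays. -/
def DecrementallyResilient (W : WAP σ υ) (t : ℕ) : Prop :=
  DecWins W t W.S.card ∅ (fun _ => none)

end WAP
section GraphConstruction

open WAP

variable {V : Type} [Fintype V] [DecidableEq V]

/-- A user of `W_{G,B}`: either a vertex user `(v, j)` or an edge user `(e, l)`. -/
abbrev UserGB (V : Type) := Sum (V × ℕ) (Sym2 V × ℕ)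

/-- The successor index modulo `N` (so `sv_{i+1}` after `sv_i`, wrapping around). -/
def nextFin {N : ℕ} (i : Fin N) : Fin N :=
  ⟨(i.1 + 1) % N, Nat.mod_lt _ (Nat.lt_of_le_of_lt (Nat.zero_le _) i.isLt)⟩

/-- The type-1 entailment constraint `ent(ρ, s, s')`: the constraint
`({s, s'}, Θ)` where `Θ` is the set of functions `θ : {s, s'} → U` with
`(θ(s), θ(s')) ∈ ρ`. -/
def entCon {σ υ : Type} [DecidableEq σ] (U : Finset υ) (ρ : υ → υ → Prop)
    (s s' : σ) : Finset σ × Set (σ → Option υ) :=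
  ({s, s'},
   {θ | (∀ x, θ x ≠ none ↔ x ∈ ({s, s'} : Finset σ)) ∧
        (∀ x v, θ x = some v → v ∈ U) ∧
        ∃ a b, θ s = some a ∧ θ s' = some b ∧ ρ a b})

/-- The vertex users: `(v, j)` for `v ∈ V` and `1 ≤ j ≤ t+1`. -/
def UVfin (V : Type) [Fintype V] [DecidableEq V] (t : ℕ) : Finset (UserGB V) :=
  (Finset.univ ×ˢ Finset.Icc 1 (t + 1)).image Sum.inl

/-- The edge users: `(e, l)` for `e ∈ E`, with `1 ≤ l ≤ t+1` if `e ∉ B` and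
`l = 1` if `e ∈ B`. -/
def UEfin (G : SimpleGraph V) [DecidableRel G.Adj] (B : Finset (Sym2 V))
    (t : ℕ) : Finset (UserGB V) :=
  (G.edgeFinset.biUnion
    (fun e => ({e} : Finset (Sym2 V)) ×ˢ
      (if e ∈ B then ({1} : Finset ℕ) else Finset.Icc 1 (t + 1)))).image Sum.inr

/-- `incident`: relates an edge user `(e, l)` to a vertex user `(v, j)` where
`v` is one of the two endpoints of `e`. -/
def incidentRel (G : SimpleGraph V) : UserGB V → UserGB V → Prop :=
  fun a b => ∃ e l v j, a = Sum.inr (e, l) ∧ b = Sum.inl (v, j) ∧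
    e ∈ G.edgeSet ∧ v ∈ e

/-- `distinct`: relates vertex users representing distinct vertices. -/
def distinctRel (V : Type) : UserGB V → UserGB V → Prop :=
  fun a b => ∃ v i w j, a = Sum.inl (v, i) ∧ b = Sum.inl (w, j) ∧ v ≠ w

/-- The workflow authorization policy `W_{G,B}` built from a finite simple
graph `G = (V, E)` and an edge set `B ⊆ E`, with budget `t = ⌊|B|/2⌋`.
Steps: `Sum.inl i` is `sv_{i+1}` and `Sum.inr i` is `se_{i+1}` (0-indexed),
the order `≼` is equality.  Constraints:  `C₁ ∪ C₂ ∪ C₃ ∪ C_ham` where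
`C₁ = {ent(incident⁻¹, sv_i, se_i)}`, `C₂ ∪ C₃ = {ent(incident, se_i, sv_{i+1 mod N})}`,
and `C_ham = {ent(distinct, sv_i, sv_j) : i < j}`. -/
def WGB (G : SimpleGraph V) [DecidableRel G.Adj] (B : Finset (Sym2 V)) :
    WAP (Sum (Fin (Fintype.card V)) (Fin (Fintype.card V))) (UserGB V) :=
  { S := Finset.univ
    ord := Eq
    U := UVfin V (B.card / 2) ∪ UEfin G B (B.card / 2)
    A := {p | match p.1 with
              | Sum.inl _ => p.2 ∈ UVfin V (B.card / 2)
              | Sum.inr _ => p.2 ∈ UEfin G B (B.card / 2)}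
    C := {c | ∃ i : Fin (Fintype.card V),
            c = entCon (UVfin V (B.card / 2) ∪ UEfin G B (B.card / 2))
                  (fun a b => incidentRel G b a) (Sum.inl i) (Sum.inr i)} ∪
         {c | ∃ i : Fin (Fintype.card V),
            c = entCon (UVfin V (B.card / 2) ∪ UEfin G B (B.card / 2))
                  (incidentRel G) (Sum.inr i) (Sum.inl (nextFin i))} ∪
         {c | ∃ i j : Fin (Fintype.card V), i < j ∧
            c = entCon (UVfin V (B.card / 2) ∪ UEfin G B (B.card / 2))
                  (distinctRel V) (Sum.inl i) (Sum.inl j)} }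

/-- `v₁, e₁, v₂, e₂, …, v_N, e_N` is a Hamiltonian cycle of `G`: the `v_i`
are pairwise distinct and cover all of `V`, and each `e_i` is an edge of `G`
joining `v_i` and `v_{i+1}` (indices modulo `N`). -/
def IsHamCycle (G : SimpleGraph V) (v : Fin (Fintype.card V) → V)
    (e : Fin (Fintype.card V) → Sym2 V) : Prop :=
  Function.Injective v ∧ (∀ x : V, ∃ i, v i = x) ∧
  ∀ i, e i ∈ G.edgeSet ∧ e i = s(v i, v (nextFin i))

end GraphConstruction


section ProofHelpers

open WAP Finset

lemma nextFin_ne {N : ℕ} (hN : 2 ≤ N) (i : Fin N) : nextFin i ≠ i := by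
  intro h
  have h1 : (i.1 + 1) % N = i.1 := congrArg Fin.val h
  have h2 := i.isLt
  rcases eq_or_lt_of_le (Nat.succ_le_of_lt h2) with h3 | h3
  · rw [Nat.succ_eq_add_one] at h3
    rw [h3, Nat.mod_self] at h1; omega
  · rw [Nat.mod_eq_of_lt h3] at h1; omega

variable {V : Type} [Fintype V] [DecidableEq V]

lemma mem_UVfin {t : ℕ} {v : V} {j : ℕ} :
    (Sum.inl (v, j) : UserGB V) ∈ UVfin V t ↔ j ∈ Finset.Icc 1 (t + 1) := by
  simp [UVfin]

lemma mem_UEfin {G : SimpleGraph V} [DecidableRel G.Adj] {B : Finset (Sym2 V)} {t : ℕ}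
    {e : Sym2 V} {l : ℕ} :
    (Sum.inr (e, l) : UserGB V) ∈ UEfin G B t ↔
      e ∈ G.edgeFinset ∧ l ∈ (if e ∈ B then ({1} : Finset ℕ) else Finset.Icc 1 (t + 1)) := by
  constructor
  · intro h
    obtain ⟨p, hp, hpe⟩ := Finset.mem_image.mp h
    obtain ⟨e', he', hp'⟩ := Finset.mem_biUnion.mp hp
    obtain ⟨hp1, hp2⟩ := Finset.mem_product.mp hp'
    obtain ⟨rfl, rfl⟩ : p.1 = e ∧ p.2 = l := by
      have := Sum.inr.inj hpe
      exact ⟨congrArg Prod.fst this, congrArg Prod.snd this⟩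
    have : e' = p.1 := (Finset.mem_singleton.mp hp1).symm
    subst this
    exact ⟨he', hp2⟩
  · rintro ⟨h1, h2⟩
    exact Finset.mem_image.mpr ⟨(e, l), Finset.mem_biUnion.mpr
      ⟨e, h1, Finset.mem_product.mpr ⟨Finset.mem_singleton_self e, h2⟩⟩, rfl⟩

lemma restrict_mem_entCon {σ υ : Type} [DecidableEq σ] [DecidableEq υ]
    (U : Finset υ) (ρ : υ → υ → Prop) (s s' : σ) (θ : σ → Option υ)
    (hθ : ∀ x u, θ x = some u → u ∈ U)
    {a b : υ} (ha : θ s = some a) (hb : θ s' = some b) (hρ : ρ a b) :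
    WAP.restrictTo θ (entCon U ρ s s').1 ∈ (entCon U ρ s s').2 := by
  have hs : s ∈ ({s, s'} : Finset σ) := Finset.mem_insert_self _ _
  have hs' : s' ∈ ({s, s'} : Finset σ) := Finset.mem_insert.mpr (Or.inr (Finset.mem_singleton_self _))
  refine ⟨?_, ?_, a, b, ?_, ?_, hρ⟩
  · intro x
    show (if x ∈ ({s, s'} : Finset σ) then θ x else none) ≠ none ↔ x ∈ ({s, s'} : Finset σ)
    by_cases hx : x ∈ ({s, s'} : Finset σ)
    · rw [if_pos hx]
      simp only [hx, iff_true]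
      rcases Finset.mem_insert.mp hx with rfl | hx'
      · simp [ha]
      · rw [Finset.mem_singleton.mp hx']; simp [hb]
    · rw [if_neg hx]; simp [hx]
  · intro x u hx
    change (if x ∈ ({s, s'} : Finset σ) then θ x else none) = some u at hx
    split at hx
    · exact hθ x u hx
    · exact absurd hx (by simp)
  · show WAP.restrictTo θ ({s, s'} : Finset σ) s = some a
    simp [WAP.restrictTo, hs, ha]
  · show WAP.restrictTo θ ({s, s'} : Finset σ) s' = some b
    simp [WAP.restrictTo, hs', hb]

lemma entCon_extract {σ υ : Type} [DecidableEq σ] [DecidableEq υ]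
    (U : Finset υ) (ρ : υ → υ → Prop) (s s' : σ) (θ : σ → Option υ)
    (h : WAP.restrictTo θ (entCon U ρ s s').1 ∈ (entCon U ρ s s').2) :
    ∃ a b, θ s = some a ∧ θ s' = some b ∧ ρ a b := by
  obtain ⟨-, -, a, b, ha, hb, hρ⟩ := h
  have hs : s ∈ ({s, s'} : Finset σ) := Finset.mem_insert_self _ _
  have hs' : s' ∈ ({s, s'} : Finset σ) := Finset.mem_insert.mpr (Or.inr (Finset.mem_singleton_self _))
  refine ⟨a, b, ?_, ?_, hρ⟩
  · have : WAP.restrictTo θ ({s, s'} : Finset σ) s = θ s := by simp [WAP.restrictTo, hs]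
    rw [← this]; exact ha
  · have : WAP.restrictTo θ ({s, s'} : Finset σ) s' = θ s' := by simp [WAP.restrictTo, hs']
    rw [← this]; exact hb

end ProofHelpers

/-- The following are equivalent: (i) for every `D ⊆ B`
with `|D| ≤ |B|/2`, the graph `G_D = (V, E ∖ D)` has a Hamiltonian cycle;
(ii) `W_{G,B}` is statically resilient for budget `t = ⌊|B|/2⌋`. -/
theorem WGB_statically_resilient_iff_dynamic_hamiltonian
    {V : Type} [Fintype V] [DecidableEq V]
    (G : SimpleGraph V) [DecidableRel G.Adj]
    (hN : 3 ≤ Fintype.card V)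
    (B : Finset (Sym2 V)) (hB : ↑B ⊆ G.edgeSet) :
    (∀ D : Finset (Sym2 V), D ⊆ B → 2 * D.card ≤ B.card →
      ∃ (v : Fin (Fintype.card V) → V) (e : Fin (Fintype.card V) → Sym2 V),
        IsHamCycle (G.deleteEdges ↑D) v e) ↔
    (WGB G B).StaticallyResilient (B.card / 2) := by
  classical
  set N := Fintype.card V with hNdef
  set t := B.card / 2 with htdef
  set UU : Finset (UserGB V) := UVfin V t ∪ UEfin G B t with hUUdef
  constructor
  · -- (i) → (ii)
    intro hHam Δ hΔU hΔcard
    set D : Finset (Sym2 V) := B.filter (fun e => (Sum.inr (e, 1) : UserGB V) ∈ Δ) with hDdef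
    have hDB' : D ⊆ B := Finset.filter_subset _ _
    have hDcard : D.card ≤ Δ.card := by
      apply Finset.card_le_card_of_injOn (fun e => (Sum.inr (e, 1) : UserGB V))
      · intro e he; exact (Finset.mem_filter.mp he).2
      · intro e _ f _ h
        have := Sum.inr.inj h
        exact congrArg Prod.fst this
    have hD2 : 2 * D.card ≤ B.card := by omega
    obtain ⟨v, e, hvinj, hvsurj, hcyc⟩ := hHam D hDB' hD2
    have hed : ∀ i, e i ∈ G.edgeSet ∧ e i ∉ (↑D : Set (Sym2 V)) := by
      intro i
      have h := (hcyc i).1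
      rw [SimpleGraph.edgeSet_deleteEdges] at h
      exact h
    have hvm : ∀ i, v i ∈ e i := by
      intro i; rw [(hcyc i).2]; exact Sym2.mem_mk_left _ _
    have hvm' : ∀ i, v (nextFin i) ∈ e i := by
      intro i; rw [(hcyc i).2]; exact Sym2.mem_mk_right _ _
    have hjv : ∀ i, ∃ j ∈ Finset.Icc 1 (t + 1), (Sum.inl (v i, j) : UserGB V) ∉ Δ := by
      intro i
      by_contra hcon
      push_neg at hcon
      have hsub : (Finset.Icc 1 (t + 1)).image (fun j => (Sum.inl (v i, j) : UserGB V)) ⊆ Δ := by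
        intro u hu; obtain ⟨j, hj, rfl⟩ := Finset.mem_image.mp hu; exact hcon j hj
      have hcard := Finset.card_le_card hsub
      rw [Finset.card_image_of_injective _
        (fun a b h => by simpa using congrArg Prod.snd (Sum.inl.inj h))] at hcard
      rw [Nat.card_Icc] at hcard
      omega
    choose jv hjv1 hjv2 using hjv
    have hje : ∀ i, ∃ l, (Sum.inr (e i, l) : UserGB V) ∈ UEfin G B t ∧
        (Sum.inr (e i, l) : UserGB V) ∉ Δ := by
      intro i
      have heG : e i ∈ G.edgeFinset := SimpleGraph.mem_edgeFinset.mpr (hed i).1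
      by_cases hBmem : e i ∈ B
      · refine ⟨1, mem_UEfin.mpr ⟨heG, by simp [hBmem]⟩, ?_⟩
        intro hmem
        exact (hed i).2 (Finset.mem_filter.mpr ⟨hBmem, hmem⟩)
      · by_contra hcon
        push_neg at hcon
        have hsub : (Finset.Icc 1 (t + 1)).image (fun l => (Sum.inr (e i, l) : UserGB V)) ⊆ Δ := by
          intro u hu; obtain ⟨l, hl, rfl⟩ := Finset.mem_image.mp hu
          exact hcon l (mem_UEfin.mpr ⟨heG, by simp [hBmem, Finset.mem_Icc.mp hl]⟩)
        have hcard := Finset.card_le_card hsub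
        rw [Finset.card_image_of_injective _
          (fun a b h => by simpa using congrArg Prod.snd (Sum.inr.inj h))] at hcard
        rw [Nat.card_Icc] at hcard
        omega
    choose el hel1 hel2 using hje
    set θ : Sum (Fin N) (Fin N) → Option (UserGB V) := fun s => match s with
      | Sum.inl i => some (Sum.inl (v i, jv i))
      | Sum.inr i => some (Sum.inr (e i, el i)) with hθdef
    have hUmem : ∀ x u, θ x = some u → u ∈ UU := by
      intro x u hx
      cases x with
      | inl i =>
        have : u = Sum.inl (v i, jv i) := (Option.some.inj hx).symm
        subst this
        exact Finset.mem_union_left _ (mem_UVfin.mpr (hjv1 i))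
      | inr i =>
        have : u = Sum.inr (e i, el i) := (Option.some.inj hx).symm
        subst this
        exact Finset.mem_union_right _ (hel1 i)
    refine ⟨θ, ⟨⟨⟨?_, ?_⟩, ?_⟩, ?_, ?_⟩, ?_⟩
    · intro s u hs
      exact ⟨Finset.mem_univ _, hUmem s u hs⟩
    · intro s₁ s₂ _ _ _ hord hne
      exact absurd hord hne
    · intro s _
      cases s <;> simp [hθdef]
    · intro s u hs
      cases s with
      | inl i =>
        have : u = Sum.inl (v i, jv i) := (Option.some.inj hs).symm
        subst this
        show Sum.inl (v i, jv i) ∈ UVfin V t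
        exact mem_UVfin.mpr (hjv1 i)
      | inr i =>
        have : u = Sum.inr (e i, el i) := (Option.some.inj hs).symm
        subst this
        show Sum.inr (e i, el i) ∈ UEfin G B t
        exact hel1 i
    · intro c hc _
      rcases hc with (hc | hc) | hc
      · obtain ⟨i, rfl⟩ := hc
        exact restrict_mem_entCon UU _ _ _ θ hUmem rfl rfl
          ⟨e i, el i, v i, jv i, rfl, rfl, (hed i).1, hvm i⟩
      · obtain ⟨i, rfl⟩ := hc
        exact restrict_mem_entCon UU _ _ _ θ hUmem rfl rfl
          ⟨e i, el i, v (nextFin i), jv (nextFin i), rfl, rfl, (hed i).1, hvm' i⟩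
      · obtain ⟨i, j, hij, rfl⟩ := hc
        exact restrict_mem_entCon UU _ _ _ θ hUmem rfl rfl
          ⟨v i, jv i, v j, jv j, rfl, rfl, fun h => (Fin.ne_of_lt hij) (hvinj h)⟩
    · intro s u hs
      cases s with
      | inl i =>
        have : u = Sum.inl (v i, jv i) := (Option.some.inj hs).symm
        subst this; exact hjv2 i
      | inr i =>
        have : u = Sum.inr (e i, el i) := (Option.some.inj hs).symm
        subst this; exact hel2 i
  · -- (ii) → (i)
    intro hres D hDB hD2
    have hDt : D.card ≤ t := by omega
    set Δ : Finset (UserGB V) := D.image (fun e => (Sum.inr (e, 1) : UserGB V)) with hΔdef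
    have hΔU : Δ ⊆ (WGB G B).U := by
      intro u hu
      obtain ⟨e, heD, rfl⟩ := Finset.mem_image.mp hu
      have heB := hDB heD
      exact Finset.mem_union_right _ (mem_UEfin.mpr
        ⟨SimpleGraph.mem_edgeFinset.mpr (hB heB), by simp [heB]⟩)
    have hΔc : Δ.card ≤ t := le_trans Finset.card_image_le hDt
    obtain ⟨θ, ⟨⟨⟨hppU, _⟩, htot⟩, hauth, hcons⟩, havoid⟩ := hres Δ hΔU hΔc
    have hvex : ∀ i : Fin N, ∃ (w : V) (j : ℕ), θ (Sum.inl i) = some (Sum.inl (w, j)) := by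
      intro i
      obtain ⟨u, hu⟩ : ∃ u, θ (Sum.inl i) = some u :=
        Option.ne_none_iff_exists'.mp (htot _ (Finset.mem_univ _))
      have hA : u ∈ UVfin V t := hauth _ _ hu
      obtain ⟨⟨w, j⟩, -, rfl⟩ := Finset.mem_image.mp hA
      exact ⟨w, j, hu⟩
    choose v jv hveq using hvex
    have heex : ∀ i : Fin N, ∃ (a : Sym2 V) (l : ℕ),
        θ (Sum.inr i) = some (Sum.inr (a, l)) ∧ a ∈ G.edgeFinset ∧ (a ∈ B → l = 1) := by
      intro i
      obtain ⟨u, hu⟩ : ∃ u, θ (Sum.inr i) = some u :=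
        Option.ne_none_iff_exists'.mp (htot _ (Finset.mem_univ _))
      have hA : u ∈ UEfin G B t := hauth _ _ hu
      obtain ⟨p, hp, hpe⟩ := Finset.mem_image.mp hA
      obtain ⟨a, l⟩ := p
      subst hpe
      have hmem := mem_UEfin.mp hA
      refine ⟨a, l, hu, hmem.1, fun hab => ?_⟩
      have := hmem.2
      rw [if_pos hab] at this
      exact Finset.mem_singleton.mp this
    choose ed el hedeq hedF hedB using heex
    have hconstr : ∀ c ∈ (WGB G B).C,
        WAP.restrictTo θ c.1 ∈ c.2 := by
      intro c hc
      exact hcons c hc (fun s _ => htot s (Finset.mem_univ _))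
    have hC1 : ∀ i : Fin N, v i ∈ ed i := by
      intro i
      have hc : entCon UU (fun a b => incidentRel G b a) (Sum.inl i) (Sum.inr i)
          ∈ (WGB G B).C := Or.inl (Or.inl ⟨i, rfl⟩)
      obtain ⟨a, b, ha, hb, hρ⟩ := entCon_extract UU _ _ _ θ (hconstr _ hc)
      obtain ⟨e', l', w, j, hbe, haw, -, hwmem⟩ := hρ
      have ha' : a = Sum.inl (v i, jv i) := by
        rw [hveq i] at ha; exact (Option.some.inj ha).symm
      have hb' : b = Sum.inr (ed i, el i) := by
        rw [hedeq i] at hb; exact (Option.some.inj hb).symm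
      rw [hb'] at hbe
      rw [ha'] at haw
      have he' : e' = ed i := (congrArg Prod.fst (Sum.inr.inj hbe)).symm
      have hw : w = v i := (congrArg Prod.fst (Sum.inl.inj haw)).symm
      rw [he', hw] at hwmem
      exact hwmem
    have hC2 : ∀ i : Fin N, v (nextFin i) ∈ ed i := by
      intro i
      have hc : entCon UU (incidentRel G) (Sum.inr i) (Sum.inl (nextFin i))
          ∈ (WGB G B).C := Or.inl (Or.inr ⟨i, rfl⟩)
      obtain ⟨a, b, ha, hb, hρ⟩ := entCon_extract UU _ _ _ θ (hconstr _ hc)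
      obtain ⟨e', l', w, j, hae, hbw, -, hwmem⟩ := hρ
      have ha' : a = Sum.inr (ed i, el i) := by
        rw [hedeq i] at ha; exact (Option.some.inj ha).symm
      have hb' : b = Sum.inl (v (nextFin i), jv (nextFin i)) := by
        rw [hveq (nextFin i)] at hb; exact (Option.some.inj hb).symm
      rw [ha'] at hae
      rw [hb'] at hbw
      have he' : e' = ed i := (congrArg Prod.fst (Sum.inr.inj hae)).symm
      have hw : w = v (nextFin i) := (congrArg Prod.fst (Sum.inl.inj hbw)).symm
      rw [he', hw] at hwmem
      exact hwmem
    have hCham : ∀ i j : Fin N, i < j → v i ≠ v j := by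
      intro i j hij
      have hc : entCon UU (distinctRel V) (Sum.inl i) (Sum.inl j)
          ∈ (WGB G B).C := Or.inr ⟨i, j, hij, rfl⟩
      obtain ⟨a, b, ha, hb, hρ⟩ := entCon_extract UU _ _ _ θ (hconstr _ hc)
      obtain ⟨w, wi, x, xj, haw, hbx, hwx⟩ := hρ
      have ha' : a = Sum.inl (v i, jv i) := by
        rw [hveq i] at ha; exact (Option.some.inj ha).symm
      have hb' : b = Sum.inl (v j, jv j) := by
        rw [hveq j] at hb; exact (Option.some.inj hb).symm
      rw [ha'] at haw
      rw [hb'] at hbx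
      have hw : w = v i := (congrArg Prod.fst (Sum.inl.inj haw)).symm
      have hx : x = v j := (congrArg Prod.fst (Sum.inl.inj hbx)).symm
      rw [hw, hx] at hwx
      exact hwx
    have hvne : ∀ i j : Fin N, i ≠ j → v i ≠ v j := by
      intro i j hij
      rcases lt_or_gt_of_ne hij with h | h
      · exact hCham i j h
      · exact (hCham j i h).symm
    have hinj : Function.Injective v := by
      intro i j h
      by_contra hne
      exact hvne i j hne h
    have hNge2 : 2 ≤ N := by omega
    have hne_next : ∀ i, v i ≠ v (nextFin i) :=
      fun i => hvne i (nextFin i) (Ne.symm (nextFin_ne hNge2 i))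
    have hedS : ∀ i, ed i = s(v i, v (nextFin i)) :=
      fun i => (Sym2.mem_and_mem_iff (hne_next i)).mp ⟨hC1 i, hC2 i⟩
    have hnotD : ∀ i, ed i ∉ (↑D : Set (Sym2 V)) := by
      intro i hmem
      have hmem' : ed i ∈ D := hmem
      have hl : el i = 1 := hedB i (hDB hmem')
      have hΔm : (Sum.inr (ed i, 1) : UserGB V) ∈ Δ := Finset.mem_image_of_mem _ hmem'
      have := hedeq i
      rw [hl] at this
      exact havoid _ _ this hΔm
    have hsurj : Function.Surjective v := by
      have hb := (Fintype.bijective_iff_injective_and_card v).mpr ⟨hinj, by simp [hNdef]⟩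
      exact hb.2
    refine ⟨v, ed, hinj, fun x => hsurj x, fun i => ⟨?_, hedS i⟩⟩
    rw [SimpleGraph.edgeSet_deleteEdges]
    exact ⟨SimpleGraph.mem_edgeFinset.mp (hedF i), hnotD i⟩
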